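/- If a domain D in the d-regular tree T_d with |D| ≥ 2 is isoperimetrically optimal, then |R(D)| ≤ d − 2. -/

import Mathlib

/-- Inner vertex boundary of a finite vertex set `D`: vertices of `D` having a neighbor
outside `D`. -/
noncomputable def innerBoundary {V : Type*} (G : SimpleGraph V) (D : Finset V) : Finset V := by
  classical exact D.filter (fun x => ∃ y, y ∉ D ∧ G.Adj x y)

/-- Outer vertex boundary of `D`: vertices outside `D` having a neighbor in `D`. -/
def outerBoundary {V : Type*} (G : SimpleGraph V) (D : Finset V) : Set V :=
  {y | y ∉ D ∧ ∃ x ∈ D, G.Adj x y}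

/-- Number of neighbors of `x` lying in `D`. -/
noncomputable def degIn {V : Type*} (G : SimpleGraph V) (D : Finset V) (x : V) : ℕ := by
  classical exact (D.filter (fun y => G.Adj x y)).card

/-- A domain: a finite nonempty vertex set whose induced subgraph is connected. -/
def IsGraphDomain {V : Type*} (G : SimpleGraph V) (D : Finset V) : Prop :=
  D.Nonempty ∧ (G.induce (↑D : Set V)).Connected

/-- `G` is a `d`-regular tree: connected, acyclic, and every vertex has degree `d`. -/
def IsRegularTree {V : Type*} (G : SimpleGraph V) (d : ℕ) : Prop :=
  G.Connected ∧ G.IsAcyclic ∧ ∀ v : V, (G.neighborSet v).ncard = d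

/-- Boundary branching excess `τ(D) = Σ_{x ∈ ∂D} (deg_D(x) − 1)`. -/
noncomputable def tauD {V : Type*} (G : SimpleGraph V) (D : Finset V) : ℕ :=
  ∑ x ∈ innerBoundary G D, (degIn G D x - 1)

/-- Residual boundary `R(D) = {x ∈ ∂D : deg_D(x) ≥ 2}`. -/
noncomputable def residualBoundary {V : Type*} (G : SimpleGraph V) (D : Finset V) : Finset V := by
  classical exact (innerBoundary G D).filter (fun x => 2 ≤ degIn G D x)

/-- `D` is isoperimetrically optimal: its inner boundary is smallest among all domains
of the same cardinality. -/
def IsOptimal {V : Type*} (G : SimpleGraph V) (D : Finset V) : Prop :=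
  ∀ D' : Finset V, IsGraphDomain G D' → D'.card = D.card →
    (innerBoundary G D).card ≤ (innerBoundary G D').card

/-! ### Auxiliary lemmas -/

open Classical in
lemma degIn_eq' {V : Type*} (G : SimpleGraph V) (D : Finset V) (x : V) :
    degIn G D x = (D.filter (fun y => G.Adj x y)).card := rfl

open Classical in
lemma mem_innerBoundary' {V : Type*} (G : SimpleGraph V) (D : Finset V) (x : V) :
    x ∈ innerBoundary G D ↔ x ∈ D ∧ ∃ y, y ∉ D ∧ G.Adj x y := by
  unfold innerBoundary; exact Finset.mem_filter

open Classical in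
lemma mem_residualBoundary' {V : Type*} (G : SimpleGraph V) (D : Finset V) (x : V) :
    x ∈ residualBoundary G D ↔ x ∈ innerBoundary G D ∧ 2 ≤ degIn G D x := by
  unfold residualBoundary; exact Finset.mem_filter

open Classical in
lemma residual_subset_inner {V : Type*} (G : SimpleGraph V) (D : Finset V) :
    residualBoundary G D ⊆ innerBoundary G D := by
  unfold residualBoundary; exact Finset.filter_subset _ _

section Aux

variable {V : Type*} {T : SimpleGraph V} {D : Finset V} {d : ℕ}

open SimpleGraph Finset

lemma nbr_finite (hreg : ∀ v, (T.neighborSet v).ncard = d) (hd : 2 ≤ d) (x : V) :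
    (T.neighborSet x).Finite := by
  by_contra h
  have := Set.Infinite.ncard h
  rw [hreg x] at this; omega

lemma degIn_le_boundary (hreg : ∀ v, (T.neighborSet v).ncard = d) (hd : 2 ≤ d) {x : V}
    (hx : x ∈ innerBoundary T D) : degIn T D x ≤ d - 1 := by
  classical
  obtain ⟨hxD, y, hyD, hadj⟩ := (mem_innerBoundary' T D x).mp hx
  have hynot : y ∉ D.filter (fun y => T.Adj x y) := by
    simp [hyD]
  have hsub : (↑(insert y (D.filter (fun y => T.Adj x y))) : Set V) ⊆ T.neighborSet x := by
    intro z hz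
    simp only [Finset.coe_insert, Set.mem_insert_iff, Finset.coe_filter, Set.mem_setOf_eq] at hz
    rcases hz with rfl | hz
    · exact hadj
    · exact hz.2
  have := Set.ncard_le_ncard hsub (nbr_finite hreg hd x)
  rw [Set.ncard_coe_finset, Finset.card_insert_of_notMem hynot, hreg x] at this
  rw [degIn_eq']; omega

lemma degIn_interior (hreg : ∀ v, (T.neighborSet v).ncard = d) (hd : 2 ≤ d) {x : V}
    (hxD : x ∈ D) (hx : x ∉ innerBoundary T D) : degIn T D x = d := by
  classical
  have hall : ∀ y, T.Adj x y → y ∈ D := by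
    intro y hadj
    by_contra hyD
    exact hx ((mem_innerBoundary' T D x).mpr ⟨hxD, y, hyD, hadj⟩)
  rw [degIn_eq', ← Set.ncard_coe_finset, ← hreg x]
  congr 1
  ext z
  simp only [Finset.coe_filter, Set.mem_setOf_eq, mem_neighborSet]
  exact ⟨fun h => h.2, fun h => ⟨hall z h, h⟩⟩

lemma induce_acyclic (hac : T.IsAcyclic) (s : Set V) : (T.induce s).IsAcyclic := by
  intro v c hc
  exact hac (c.map (SimpleGraph.Embedding.induce (G := T) s).toHom)
    (hc.map (SimpleGraph.Embedding.induce (G := T) s).injective)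

lemma handshake (hac : T.IsAcyclic) (hD : IsGraphDomain T D) :
    ∑ x ∈ D, degIn T D x + 2 = 2 * D.card := by
  classical
  set G' := T.induce (↑D : Set V) with hG'
  haveI : DecidableRel G'.Adj := Classical.decRel _
  have htree : G'.IsTree := ⟨hD.2, induce_acyclic hac _⟩
  have hedges := htree.card_edgeFinset
  have hsum := G'.sum_degrees_eq_twice_card_edges
  have hdeg : ∀ (v : (↑D : Set V)), G'.degree v = degIn T D v.1 := by
    intro v
    rw [degIn_eq', ← card_neighborFinset_eq_degree]
    refine Finset.card_bij (fun z _ => z.1) ?_ ?_ ?_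
    · intro z hz
      rw [mem_neighborFinset] at hz
      exact Finset.mem_filter.mpr ⟨z.2, hz⟩
    · intro a _ b _ h
      exact Subtype.ext h
    · intro y hy
      rw [Finset.mem_filter] at hy
      exact ⟨⟨y, hy.1⟩, (mem_neighborFinset _ _ _).mpr hy.2, rfl⟩
  have h1 : ∑ v : (↑D : Set V), G'.degree v = ∑ x ∈ D, degIn T D x := by
    refine Finset.sum_bij (fun (v : (↑D : Set V)) _ => v.1) ?_ ?_ ?_ ?_
    · intro v _; exact v.2
    · intro a _ b _ h; exact Subtype.ext h
    · intro y hy; exact ⟨⟨y, hy⟩, Finset.mem_univ _, rfl⟩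
    · intro v _; exact hdeg v
  have hcard : Fintype.card (↑(↑D : Set V)) = D.card := by simp
  omega

lemma boundary_nonempty (hd : 2 ≤ d) (hreg : ∀ v, (T.neighborSet v).ncard = d)
    (hac : T.IsAcyclic) (hD : IsGraphDomain T D) : (innerBoundary T D).Nonempty := by
  classical
  by_contra h
  rw [Finset.not_nonempty_iff_eq_empty] at h
  have hall : ∀ x ∈ D, degIn T D x = d := fun x hx =>
    degIn_interior hreg hd hx (by rw [h]; exact Finset.notMem_empty x)
  have hsum := handshake hac hD
  rw [Finset.sum_congr rfl hall, Finset.sum_const, smul_eq_mul] at hsum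
  have h1 : 1 ≤ D.card := Finset.card_pos.mpr hD.1
  have h2 : 2 * D.card ≤ D.card * d := by
    calc 2 * D.card = D.card * 2 := Nat.mul_comm _ _
    _ ≤ D.card * d := Nat.mul_le_mul_left _ hd
  linarith

lemma walk_in_D (hD : IsGraphDomain T D) {x z : V} (hx : x ∈ D) (hz : z ∈ D) :
    ∃ p : T.Walk z x, p.IsPath ∧ ∀ v ∈ p.support, v ∈ D := by
  classical
  obtain ⟨w⟩ := hD.2.preconnected ⟨z, hz⟩ ⟨x, hx⟩
  set w' : T.Walk z x :=
    w.map (SimpleGraph.Embedding.induce (G := T) (↑D : Set V)).toHom with hw'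
  refine ⟨w'.toPath.1, w'.toPath.2, ?_⟩
  intro v hv
  have hv' : v ∈ w'.support := Walk.support_toPath_subset w' hv
  have hv'' : v ∈ w.support.map (SimpleGraph.Embedding.induce (G := T) (↑D : Set V)).toHom := by
    have h := Walk.support_map (SimpleGraph.Embedding.induce (G := T) (↑D : Set V)).toHom w
    rw [← h]; exact hv'
  obtain ⟨u, _, rfl⟩ := List.mem_map.mp hv''
  exact u.2

lemma unique_nbr (hac : T.IsAcyclic) (hD : IsGraphDomain T D) {x z y : V}
    (hx : x ∈ D) (hz : z ∈ D) (hy : y ∉ D) (haxy : T.Adj y x) (hazy : T.Adj y z) :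
    x = z := by
  classical
  obtain ⟨p, hp, hsupp⟩ := walk_in_D hD hx hz
  have h1 : (Walk.cons haxy Walk.nil).IsPath := by simp [haxy.ne]
  have h2 : (Walk.cons hazy p).IsPath := by
    rw [Walk.cons_isPath_iff]
    exact ⟨hp, fun hmem => hy (hsupp y hmem)⟩
  have heq := (SimpleGraph.isAcyclic_iff_path_unique.mp hac)
    (⟨Walk.cons haxy Walk.nil, h1⟩ : T.Path y x) ⟨Walk.cons hazy p, h2⟩
  have hlen := congrArg (fun q : T.Path y x => q.1.length) heq
  simp only [Walk.length_cons, Walk.length_nil] at hlen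
  have : p.length = 0 := by omega
  exact (Walk.eq_of_length_eq_zero this).symm

lemma degIn_pos (hD : IsGraphDomain T D) (h2 : 2 ≤ D.card) {x : V} (hx : x ∈ D) :
    1 ≤ degIn T D x := by
  classical
  obtain ⟨z, hz, hne⟩ := Finset.exists_mem_ne (s := D) (by omega) x
  obtain ⟨p, hp, hsupp⟩ := walk_in_D hD hz hx
  cases p with
  | nil => exact absurd rfl hne
  | cons h q =>
    rw [degIn_eq']
    refine Finset.card_pos.mpr ⟨_, Finset.mem_filter.mpr ⟨?_, h⟩⟩
    exact hsupp _ (by simp [Walk.support_cons])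

lemma identity_lemma (hd : 2 ≤ d) (hreg : ∀ v, (T.neighborSet v).ncard = d)
    (hac : T.IsAcyclic) (hD : IsGraphDomain T D) (h2 : 2 ≤ D.card) :
    tauD T D + (innerBoundary T D).card + d * D.card + 2
      = 2 * D.card + d * (innerBoundary T D).card := by
  classical
  have hBD : innerBoundary T D ⊆ D := fun x hx => ((mem_innerBoundary' T D x).mp hx).1
  have hsplit : ∑ x ∈ D \ innerBoundary T D, degIn T D x
      + ∑ x ∈ innerBoundary T D, degIn T D x = ∑ x ∈ D, degIn T D x :=
    Finset.sum_sdiff hBD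
  have hB : ∑ x ∈ innerBoundary T D, degIn T D x
      = tauD T D + (innerBoundary T D).card := by
    unfold tauD
    rw [Finset.card_eq_sum_ones, ← Finset.sum_add_distrib]
    exact Finset.sum_congr rfl (fun x hx => (Nat.sub_add_cancel (degIn_pos hD h2 (hBD hx))).symm)
  have hle : (innerBoundary T D).card ≤ D.card := Finset.card_le_card hBD
  obtain ⟨a, ha⟩ : ∃ a, D.card = (innerBoundary T D).card + a :=
    ⟨D.card - (innerBoundary T D).card, by omega⟩
  have hI : ∑ x ∈ D \ innerBoundary T D, degIn T D x = d * a := by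
    rw [Finset.sum_congr rfl (fun x hx =>
      degIn_interior hreg hd (Finset.mem_sdiff.mp hx).1 (Finset.mem_sdiff.mp hx).2),
      Finset.sum_const, smul_eq_mul, Finset.card_sdiff_of_subset hBD]
    rw [ha]
    simp [Nat.mul_comm]
  have hsum := handshake hac hD
  rw [← hsplit, hI, hB] at hsum
  rw [ha]
  have q1 : d * ((innerBoundary T D).card + a) = d * (innerBoundary T D).card + d * a :=
    Nat.mul_add _ _ _
  rw [q1]
  linarith

lemma tau_le_of_residual (hd : 2 ≤ d) (hreg : ∀ v, (T.neighborSet v).ncard = d)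
    (hres : (residualBoundary T D).card ≤ 1) : tauD T D ≤ d - 2 := by
  classical
  have hsub := residual_subset_inner T D
  have h1 : tauD T D = ∑ x ∈ residualBoundary T D, (degIn T D x - 1) := by
    unfold tauD
    refine (Finset.sum_subset hsub ?_).symm
    intro x hx hnx
    have : ¬ 2 ≤ degIn T D x := fun h => hnx ((mem_residualBoundary' T D x).mpr ⟨hx, h⟩)
    omega
  have h2 : ∀ x ∈ residualBoundary T D, degIn T D x - 1 ≤ d - 2 := by
    intro x hx
    have := degIn_le_boundary hreg hd (hsub hx)
    omega
  calc tauD T D ≤ ∑ _x ∈ residualBoundary T D, (d - 2) := h1 ▸ Finset.sum_le_sum h2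
    _ = (residualBoundary T D).card * (d - 2) := by rw [Finset.sum_const, smul_eq_mul]
    _ ≤ 1 * (d - 2) := Nat.mul_le_mul_right _ hres
    _ = d - 2 := Nat.one_mul _

lemma residual_card_le_tau (hD : IsGraphDomain T D) :
    (residualBoundary T D).card ≤ tauD T D := by
  classical
  calc (residualBoundary T D).card = ∑ _x ∈ residualBoundary T D, 1 := by
        rw [Finset.sum_const, smul_eq_mul, Nat.mul_one]
    _ ≤ ∑ x ∈ residualBoundary T D, (degIn T D x - 1) := by
        refine Finset.sum_le_sum ?_
        intro x hx
        have := ((mem_residualBoundary' T D x).mp hx).2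
        omega
    _ ≤ ∑ x ∈ innerBoundary T D, (degIn T D x - 1) :=
        Finset.sum_le_sum_of_subset (residual_subset_inner T D)
    _ = tauD T D := rfl

lemma singleton_domain (T : SimpleGraph V) (v : V) : IsGraphDomain T {v} := by
  refine ⟨Finset.singleton_nonempty v, ?_⟩
  rw [connected_iff]
  refine ⟨?_, ⟨⟨v, by simp⟩⟩⟩
  intro a b
  have : a = b := Subtype.ext (by
    have ha := a.2; have hb := b.2
    simp only [Finset.coe_singleton, Set.mem_singleton_iff] at ha hb
    rw [ha, hb])
  rw [this]

lemma insert_domain [DecidableEq V] (hD : IsGraphDomain T D) {x y : V}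
    (hx : x ∈ D) (hxy : T.Adj x y) : IsGraphDomain T (insert y D) := by
  refine ⟨Finset.insert_nonempty y D, ?_⟩
  rw [connected_iff]
  have hsub : (↑D : Set V) ⊆ (↑(insert y D) : Set V) := by
    intro v hv; simp only [Finset.coe_insert, Set.mem_insert_iff, Finset.mem_coe] at *
    exact Or.inr hv
  refine ⟨?_, ⟨⟨x, hsub hx⟩⟩⟩
  have key : ∀ u : (↑(insert y D) : Set V),
      (T.induce (↑(insert y D) : Set V)).Reachable u ⟨x, hsub hx⟩ := by
    intro u
    have hu := u.2
    simp only [Finset.coe_insert, Set.mem_insert_iff, Finset.mem_coe] at hu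
    rcases hu with hu | hu
    · have hadj : (T.induce (↑(insert y D) : Set V)).Adj u ⟨x, hsub hx⟩ := by
        simp only [comap_adj, Function.Embedding.coe_subtype]
        rw [hu]
        exact hxy.symm
      exact hadj.reachable
    · have hr : (T.induce (↑D : Set V)).Reachable ⟨u.1, hu⟩ ⟨x, hx⟩ :=
        hD.2.preconnected _ _
      have hmap := hr.map (SimpleGraph.induceHomOfLE T hsub).toHom
      have hl : (SimpleGraph.induceHomOfLE T hsub).toHom ⟨u.1, hu⟩ = u := Subtype.ext rfl
      have h2 : (SimpleGraph.induceHomOfLE T hsub).toHom ⟨x, hx⟩ = ⟨x, hsub hx⟩ :=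
        Subtype.ext rfl
      rwa [hl, h2] at hmap
  intro a b
  exact (key a).trans (key b).symm

lemma grow (hd : 2 ≤ d) (hT : IsRegularTree T d) (hD : IsGraphDomain T D)
    (hres : (residualBoundary T D).card ≤ 1) :
    ∃ D' : Finset V, IsGraphDomain T D' ∧ D'.card = D.card + 1 ∧
      (residualBoundary T D').card ≤ 1 := by
  classical
  obtain ⟨hconn, hac, hreg⟩ := hT
  obtain ⟨x, hxB, hRx⟩ : ∃ x ∈ innerBoundary T D, ∀ z ∈ residualBoundary T D, z = x := by
    by_cases hR : (residualBoundary T D).Nonempty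
    · obtain ⟨x, hxR⟩ := hR
      refine ⟨x, residual_subset_inner T D hxR, ?_⟩
      intro z hz
      exact Finset.card_le_one.mp hres z hz x hxR
    · obtain ⟨x, hx⟩ := boundary_nonempty hd hreg hac hD
      exact ⟨x, hx, fun z hz => absurd ⟨z, hz⟩ hR⟩
  obtain ⟨hxD, y, hyD, hxy⟩ := (mem_innerBoundary' T D x).mp hxB
  refine ⟨insert y D, insert_domain hD hxD hxy,
    by rw [Finset.card_insert_of_notMem hyD], ?_⟩
  rw [Finset.card_le_one]
  suffices hsuf : ∀ z ∈ residualBoundary T (insert y D), z = x by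
    intro a ha b hb; rw [hsuf a ha, hsuf b hb]
  intro z hz
  obtain ⟨hzB, hz2⟩ := (mem_residualBoundary' T _ z).mp hz
  obtain ⟨hzD', w, hwD', hzw⟩ := (mem_innerBoundary' T _ z).mp hzB
  by_contra hzx
  rcases Finset.mem_insert.mp hzD' with rfl | hzD
  · -- z = y
    have hsub1 : (insert z D).filter (fun v => T.Adj z v) ⊆ {x} := by
      intro v hv
      obtain ⟨hvD', hadj⟩ := Finset.mem_filter.mp hv
      rcases Finset.mem_insert.mp hvD' with rfl | hvD
      · exact absurd hadj (T.loopless.irrefl v)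
      · exact Finset.mem_singleton.mpr (unique_nbr hac hD hxD hvD hyD hxy.symm hadj).symm
    have hcard := Finset.card_le_card hsub1
    rw [Finset.card_singleton] at hcard
    rw [degIn_eq'] at hz2
    omega
  · -- z ∈ D, z ≠ x
    have hnadj : ¬ T.Adj z y := fun h =>
      hzx (unique_nbr hac hD hxD hzD hyD hxy.symm h.symm).symm
    have hdeq : degIn T (insert y D) z = degIn T D z := by
      rw [degIn_eq', degIn_eq', Finset.filter_insert, if_neg hnadj]
    have hw : w ∉ D := fun hwD => hwD' (Finset.mem_insert_of_mem hwD)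
    have hzres : z ∈ residualBoundary T D :=
      (mem_residualBoundary' T D z).mpr
        ⟨(mem_innerBoundary' T D z).mpr ⟨hzD, w, hw, hzw⟩, by rw [← hdeq]; exact hz2⟩
    exact hzx (hRx z hzres)

lemma exists_good (hd : 2 ≤ d) (hT : IsRegularTree T d) (n : ℕ) (hn : 1 ≤ n) :
    ∃ D' : Finset V, IsGraphDomain T D' ∧ D'.card = n ∧
      (residualBoundary T D').card ≤ 1 := by
  induction n with
  | zero => omega
  | succ m ih =>
    rcases Nat.lt_or_ge 1 (m + 1) with h | h
    · obtain ⟨D', hD', hc, hr⟩ := ih (by omega)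
      obtain ⟨D'', h1, h2, h3⟩ := grow hd hT hD' hr
      exact ⟨D'', h1, by omega, h3⟩
    · have hm : m = 0 := by omega
      subst hm
      obtain ⟨v⟩ := hT.1.nonempty
      refine ⟨{v}, singleton_domain T v, Finset.card_singleton v, ?_⟩
      have hsub : residualBoundary T {v} ⊆ {v} := fun z hz =>
        ((mem_innerBoundary' T {v} z).mp (residual_subset_inner T {v} hz)).1
      have := Finset.card_le_card hsub
      simpa using this

end Aux

/-- If a domain `D` with `|D| ≥ 2` is isoperimetrically optimal, then `|R(D)| ≤ d − 2`. -/
theorem stmt_12 {V : Type*} (d : ℕ) (hd : 2 ≤ d) (T : SimpleGraph V)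
    (hT : IsRegularTree T d) (D : Finset V) (hD : IsGraphDomain T D) (hcard : 2 ≤ D.card)
    (hopt : IsOptimal T D) :
    (residualBoundary T D).card ≤ d - 2 := by
  classical
  obtain ⟨hconn, hac, hreg⟩ := hT
  obtain ⟨D', hdom', hcard', hres'⟩ := exists_good hd ⟨hconn, hac, hreg⟩ D.card (by omega)
  have hb := hopt D' hdom' hcard'
  have e1 := identity_lemma hd hreg hac hD hcard
  have e2 := identity_lemma hd hreg hac hdom' (by omega)
  rw [hcard'] at e2
  have htau' : tauD T D' ≤ d - 2 := tau_le_of_residual hd hreg hres'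
  have hRtau : (residualBoundary T D).card ≤ tauD T D := residual_card_le_tau hD
  obtain ⟨e, rfl⟩ : ∃ e, d = 2 + e := ⟨d - 2, by omega⟩
  have hmul : e * (innerBoundary T D).card ≤ e * (innerBoundary T D').card :=
    Nat.mul_le_mul_left e hb
  have hfin : tauD T D ≤ tauD T D' := by
    have q1 : (2 + e) * D.card = 2 * D.card + e * D.card := by ring
    have q2 : (2 + e) * (innerBoundary T D).card
        = 2 * (innerBoundary T D).card + e * (innerBoundary T D).card := by ring
    have q3 : (2 + e) * (innerBoundary T D').card
        = 2 * (innerBoundary T D').card + e * (innerBoundary T D').card := by ring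
    rw [q1, q2] at e1
    rw [q1, q3] at e2
    linarith
  omega
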